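/- For all distinct positive real numbers a and b, I(a,b) > Q(A(a,b), G(a,b)) > √(I(A(a,b)², G(a,b)²)); in particular the left-hand inequality of Seiffert, I(a,b) > √(I(A(a,b)², G(a,b)²)), is refined through the root-square mean of A and G. -/

import Mathlib

noncomputable def A (a b : ℝ) : ℝ := (a + b) / 2
noncomputable def G (a b : ℝ) : ℝ := Real.sqrt (a * b)
noncomputable def I (a b : ℝ) : ℝ := (1 / Real.exp 1) * (a ^ a / b ^ b) ^ (1 / (a - b))
noncomputable def Q (a b : ℝ) : ℝ := Real.sqrt ((a ^ 2 + b ^ 2) / 2)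

open Real

noncomputable def mH (b a : ℝ) : ℝ :=
  Real.log 8 + 2 * Real.log a - Real.log (a ^ 2 + 6 * a * b + b ^ 2)
    - (a - b) * (2 * a + 6 * b) / (a ^ 2 + 6 * a * b + b ^ 2)

noncomputable def mF (b a : ℝ) : ℝ :=
  2 * (a * Real.log a - b * Real.log b) - 2 * (a - b)
    - (a - b) * (Real.log (a ^ 2 + 6 * a * b + b ^ 2) - Real.log 8)

noncomputable def mK (y x : ℝ) : ℝ :=
  (x - y) * (Real.log ((x + y) / 2) + 1) - x * Real.log x + y * Real.log y

lemma mD_pos {b a : ℝ} (hb : 0 < b) (ha : 0 < a) : 0 < a ^ 2 + 6 * a * b + b ^ 2 := by positivity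

lemma hasDerivAt_mD (b a : ℝ) :
    HasDerivAt (fun x : ℝ => x ^ 2 + 6 * x * b + b ^ 2) (2 * a + 6 * b) a := by
  have h1 : HasDerivAt (fun x : ℝ => x ^ 2) (2 * a) a := by
    simpa using hasDerivAt_pow 2 a
  have h2 : HasDerivAt (fun x : ℝ => 6 * x * b) (6 * b) a := by
    have := (hasDerivAt_id a).const_mul (6 * b)
    simpa [mul_comm, mul_assoc, mul_left_comm] using this
  simpa using (h1.add h2).add_const (b ^ 2)

lemma hasDerivAt_mH {b a : ℝ} (hb : 0 < b) (ha : 0 < a) :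
    HasDerivAt (mH b)
      (-2 * b * (a - b) * (a ^ 2 - 10 * a * b + b ^ 2) / (a * (a ^ 2 + 6 * a * b + b ^ 2) ^ 2)) a := by
  have hD0 : (0:ℝ) < a ^ 2 + 6 * a * b + b ^ 2 := mD_pos hb ha
  have hD := hasDerivAt_mD b a
  have hlogD : HasDerivAt (fun x : ℝ => Real.log (x ^ 2 + 6 * x * b + b ^ 2))
      ((a ^ 2 + 6 * a * b + b ^ 2)⁻¹ * (2 * a + 6 * b)) a :=
    by have := (Real.hasDerivAt_log hD0.ne').comp a hD; exact this
  have hN : HasDerivAt (fun x : ℝ => (x - b) * (2 * x + 6 * b)) (4 * a + 4 * b) a := by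
    have h1 : HasDerivAt (fun x : ℝ => x - b) 1 a := (hasDerivAt_id a).sub_const b
    have h2 : HasDerivAt (fun x : ℝ => 2 * x + 6 * b) 2 a := by
      simpa using ((hasDerivAt_id a).const_mul 2).add_const (6 * b)
    have := h1.mul h2
    refine this.congr_deriv ?_
    ring
  have hquot := hN.div hD hD0.ne'
  have hloga : HasDerivAt (fun x : ℝ => 2 * Real.log x) (2 * a⁻¹) a :=
    (Real.hasDerivAt_log ha.ne').const_mul 2
  have hmain := ((hloga.const_add (Real.log 8)).sub hlogD).sub hquot
  have : HasDerivAt (mH b)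
      (Real.log 8 + 2 * Real.log a - Real.log (a ^ 2 + 6 * a * b + b ^ 2)
        - (a - b) * (2 * a + 6 * b) / (a ^ 2 + 6 * a * b + b ^ 2)) a → True := fun _ => trivial
  refine hmain.congr_deriv ?_
  field_simp
  ring

lemma hasDerivAt_mF {b a : ℝ} (hb : 0 < b) (ha : 0 < a) :
    HasDerivAt (mF b) (mH b a) a := by
  have hD0 : (0:ℝ) < a ^ 2 + 6 * a * b + b ^ 2 := mD_pos hb ha
  have hD := hasDerivAt_mD b a
  have hxlog : HasDerivAt (fun x : ℝ => x * Real.log x) (Real.log a + 1) a := by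
    have := (hasDerivAt_id a).mul (Real.hasDerivAt_log ha.ne')
    refine this.congr_deriv ?_
    simp only [id]
    field_simp
  have h1 : HasDerivAt (fun x : ℝ => 2 * (x * Real.log x - b * Real.log b))
      (2 * (Real.log a + 1)) a := ((hxlog.sub_const (b * Real.log b)).const_mul 2)
  have h2 : HasDerivAt (fun x : ℝ => 2 * (x - b)) 2 a := by
    simpa using ((hasDerivAt_id a).sub_const b).const_mul 2
  have hlogD : HasDerivAt (fun x : ℝ => Real.log (x ^ 2 + 6 * x * b + b ^ 2) - Real.log 8)
      ((a ^ 2 + 6 * a * b + b ^ 2)⁻¹ * (2 * a + 6 * b)) a :=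
    by have := (Real.hasDerivAt_log hD0.ne').comp a hD; exact this.sub_const (Real.log 8)
  have h3 := ((hasDerivAt_id a).sub_const b).mul hlogD
  have hmain := (h1.sub h2).sub h3
  refine hmain.congr_deriv ?_
  unfold mH
  simp only [id]
  field_simp
  ring

lemma hasDerivAt_mK {y x : ℝ} (hy : 0 < y) (hx : 0 < x) :
    HasDerivAt (mK y) (Real.log ((x + y) / 2) - Real.log x + (x - y) / (x + y)) x := by
  have hxy0 : (0:ℝ) < (x + y) / 2 := by linarith
  have hin : HasDerivAt (fun t : ℝ => (t + y) / 2) (1 / 2) x := by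
    simpa using ((hasDerivAt_id x).add_const y).div_const 2
  have hlog : HasDerivAt (fun t : ℝ => Real.log ((t + y) / 2) + 1)
      (((x + y) / 2)⁻¹ * (1 / 2)) x :=
    by have := (Real.hasDerivAt_log hxy0.ne').comp x hin; exact this.add_const 1
  have h1 := ((hasDerivAt_id x).sub_const y).mul hlog
  have hxlog : HasDerivAt (fun t : ℝ => t * Real.log t) (Real.log x + 1) x := by
    have := (hasDerivAt_id x).mul (Real.hasDerivAt_log hx.ne')
    refine this.congr_deriv ?_
    simp only [id]
    field_simp
  have hmain := (h1.sub hxlog).add_const (y * Real.log y)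
  refine hmain.congr_deriv ?_
  have hxy : x + y ≠ 0 := by positivity
  simp only [id]
  field_simp
  ring

lemma mH_self {b : ℝ} (hb : 0 < b) : mH b b = 0 := by
  unfold mH
  have h1 : b ^ 2 + 6 * b * b + b ^ 2 = 8 * b ^ 2 := by ring
  rw [h1, Real.log_mul (by norm_num) (by positivity), Real.log_pow]
  push_cast
  ring

noncomputable def phi (u : ℝ) : ℝ :=
  Real.log 8 - Real.log (1 + 6 * u + u ^ 2) - (2 + 4 * u - 6 * u ^ 2) / (1 + 6 * u + u ^ 2)

lemma mH_eq_phi {b a : ℝ} (hb : 0 < b) (ha : 0 < a) : mH b a = phi (b / a) := by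
  have hD0 : (0:ℝ) < a ^ 2 + 6 * a * b + b ^ 2 := mD_pos hb ha
  have h1 : 1 + 6 * (b / a) + (b / a) ^ 2 = (a ^ 2 + 6 * a * b + b ^ 2) / a ^ 2 := by
    field_simp
  have h2 : (0:ℝ) < 1 + 6 * (b / a) + (b / a) ^ 2 := by
    rw [h1]
    positivity
  unfold mH phi
  rw [h1, Real.log_div hD0.ne' (by positivity), Real.log_pow]
  have h3 : (2 + 4 * (b / a) - 6 * (b / a) ^ 2) / ((a ^ 2 + 6 * a * b + b ^ 2) / a ^ 2)
      = (a - b) * (2 * a + 6 * b) / (a ^ 2 + 6 * a * b + b ^ 2) := by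
    field_simp
    ring
  rw [h3]
  ring

lemma mH_tendsto {b : ℝ} (hb : 0 < b) :
    Filter.Tendsto (mH b) Filter.atTop (nhds (Real.log 8 - 2)) := by
  have hu : Filter.Tendsto (fun a : ℝ => b / a) Filter.atTop (nhds 0) :=
    Filter.Tendsto.div_atTop tendsto_const_nhds Filter.tendsto_id
  have hc : ContinuousAt phi 0 := by
    have hden : ContinuousAt (fun u : ℝ => 1 + 6 * u + u ^ 2) 0 := by fun_prop
    have hne : (1 : ℝ) + 6 * 0 + 0 ^ 2 ≠ 0 := by norm_num
    have hlog : ContinuousAt (fun u : ℝ => Real.log (1 + 6 * u + u ^ 2)) 0 :=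
      hden.log hne
    have hdiv : ContinuousAt (fun u : ℝ => (2 + 4 * u - 6 * u ^ 2) / (1 + 6 * u + u ^ 2)) 0 :=
      ContinuousAt.div (by fun_prop) hden hne
    exact (continuousAt_const.sub hlog).sub hdiv
  have hval : phi 0 = Real.log 8 - 2 := by
    unfold phi
    norm_num
  have : Filter.Tendsto (fun a : ℝ => phi (b / a)) Filter.atTop (nhds (Real.log 8 - 2)) := by
    rw [← hval]
    exact hc.tendsto.comp hu
  refine this.congr' ?_
  filter_upwards [Filter.eventually_gt_atTop 0] with a ha
  exact (mH_eq_phi hb ha).symm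

lemma mH_pos {b a : ℝ} (hb : 0 < b) (hba : b < a) : 0 < mH b a := by
  have hs2 : Real.sqrt 6 ^ 2 = 6 := Real.sq_sqrt (by norm_num)
  have hs0 : 0 ≤ Real.sqrt 6 := Real.sqrt_nonneg 6
  have hs : 2 < Real.sqrt 6 := by nlinarith
  set s := Real.sqrt 6 with hsdef
  set c := (5 + 2 * s) * b with hc
  have hbc : b < c := by nlinarith
  rcases le_or_gt a c with hac | hac
  · -- monotone region
    have hmono : StrictMonoOn (mH b) (Set.Icc b c) := by
      apply strictMonoOn_of_deriv_pos (convex_Icc b c)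
      · intro x hx
        exact (hasDerivAt_mH hb (hb.trans_le hx.1)).continuousAt.continuousWithinAt
      · intro x hx
        rw [interior_Icc] at hx
        have hx0 : 0 < x := hb.trans hx.1
        rw [(hasDerivAt_mH hb hx0).deriv]
        have h1 : x - (5 + 2 * s) * b < 0 := by rw [← hc]; linarith [hx.2]
        have h2 : 0 < x - (5 - 2 * s) * b := by nlinarith [hx.1]
        have hq : x ^ 2 - 10 * x * b + b ^ 2 < 0 := by nlinarith [mul_neg_of_pos_of_neg h2 h1]
        have hnum : 0 < -2 * b * (x - b) * (x ^ 2 - 10 * x * b + b ^ 2) := by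
          nlinarith [mul_pos (mul_pos hb (sub_pos.2 hx.1)) (neg_pos.2 hq)]
        exact div_pos hnum (by positivity)
    have := hmono (Set.left_mem_Icc.2 hbc.le) ⟨hba.le, hac⟩ hba
    rwa [mH_self hb] at this
  · -- antitone region, bound by the limit
    have hanti : AntitoneOn (mH b) (Set.Ici c) := by
      apply antitoneOn_of_deriv_nonpos (convex_Ici c)
      · intro x hx
        have hx0 : 0 < x := lt_of_lt_of_le (hb.trans hbc) hx
        exact (hasDerivAt_mH hb hx0).continuousAt.continuousWithinAt
      · intro x hx
        rw [interior_Ici] at hx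
        have hx0 : 0 < x := (hb.trans hbc).trans hx
        exact (hasDerivAt_mH hb hx0).differentiableAt.differentiableWithinAt
      · intro x hx
        rw [interior_Ici] at hx
        have hx0 : 0 < x := (hb.trans hbc).trans hx
        rw [(hasDerivAt_mH hb hx0).deriv]
        have hcx : c < x := hx
        have h1 : 0 < x - (5 + 2 * s) * b := by rw [← hc]; linarith
        have h2 : 0 < x - (5 - 2 * s) * b := by nlinarith
        have hq : 0 < x ^ 2 - 10 * x * b + b ^ 2 := by nlinarith [mul_pos h2 h1]
        have hbx : b < x := hbc.trans hcx
        have hnum : -2 * b * (x - b) * (x ^ 2 - 10 * x * b + b ^ 2) ≤ 0 := by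
          nlinarith [mul_pos (mul_pos hb (sub_pos.2 hbx)) hq]
        exact div_nonpos_of_nonpos_of_nonneg hnum (by positivity)
    have hL : Real.log 8 - 2 ≤ mH b a := by
      refine le_of_tendsto (mH_tendsto hb) ?_
      filter_upwards [Filter.eventually_ge_atTop a] with y hy
      exact hanti (Set.mem_Ici.2 hac.le) (Set.mem_Ici.2 (hac.le.trans hy)) hy
    have h8 : (2:ℝ) < Real.log 8 := by
      rw [Real.lt_log_iff_exp_lt (by norm_num)]
      have he : Real.exp 2 = Real.exp 1 * Real.exp 1 := by
        rw [show (2:ℝ) = 1 + 1 by norm_num, Real.exp_add]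
      have := Real.exp_one_lt_d9
      nlinarith [Real.exp_pos 1]
    linarith

lemma mF_pos {b a : ℝ} (hb : 0 < b) (hba : b < a) : 0 < mF b a := by
  have hmono : StrictMonoOn (mF b) (Set.Ici b) := by
    apply strictMonoOn_of_deriv_pos (convex_Ici b)
    · intro x hx
      exact (hasDerivAt_mF hb (hb.trans_le hx)).continuousAt.continuousWithinAt
    · intro x hx
      rw [interior_Ici] at hx
      rw [(hasDerivAt_mF hb (hb.trans hx)).deriv]
      exact mH_pos hb hx
  have := hmono (Set.self_mem_Ici) (Set.mem_Ici.2 hba.le) hba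
  have hself : mF b b = 0 := by unfold mF; ring
  rwa [hself] at this

lemma mK_pos {y x : ℝ} (hy : 0 < y) (hxy : y < x) : 0 < mK y x := by
  have hmono : StrictMonoOn (mK y) (Set.Ici y) := by
    apply strictMonoOn_of_deriv_pos (convex_Ici y)
    · intro x hx
      exact (hasDerivAt_mK hy (hy.trans_le hx)).continuousAt.continuousWithinAt
    · intro t ht
      rw [interior_Ici] at ht
      have ht0 : 0 < t := hy.trans ht
      rw [(hasDerivAt_mK hy ht0).deriv]
      have hyt : y < t := ht
      have hty : 0 < t + y := by linarith
      have hpos : 0 < 2 * t / (t + y) := by positivity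
      have hne : 2 * t / (t + y) ≠ 1 := by
        intro h
        rw [div_eq_one_iff_eq hty.ne'] at h
        linarith
      have hlt := Real.log_lt_sub_one_of_pos hpos hne
      rw [Real.log_div (by positivity) hty.ne', Real.log_mul two_ne_zero ht0.ne'] at hlt
      rw [Real.log_div (by positivity) two_ne_zero]
      have heq : 2 * t / (t + y) - 1 = (t - y) / (t + y) := by field_simp; ring
      rw [heq] at hlt
      linarith
  have := hmono (Set.self_mem_Ici) (Set.mem_Ici.2 hxy.le) hxy
  have hself : mK y y = 0 := by unfold mK; ring
  rwa [hself] at this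

lemma log_I {a b : ℝ} (ha : 0 < a) (hb : 0 < b) (hab : a ≠ b) :
    Real.log (I a b) = (a * Real.log a - b * Real.log b) / (a - b) - 1 := by
  have hA : (0:ℝ) < a ^ a := Real.rpow_pos_of_pos ha a
  have hB : (0:ℝ) < b ^ b := Real.rpow_pos_of_pos hb b
  have hpow : (0:ℝ) < a ^ a / b ^ b := div_pos hA hB
  have hd : a - b ≠ 0 := sub_ne_zero.2 hab
  unfold I
  rw [Real.log_mul (by positivity) (Real.rpow_pos_of_pos hpow _).ne',
    Real.log_rpow hpow, Real.log_div hA.ne' hB.ne', Real.log_rpow ha, Real.log_rpow hb,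
    one_div, Real.log_inv, Real.log_exp]
  field_simp
  ring

lemma I_pos {a b : ℝ} (ha : 0 < a) (hb : 0 < b) : 0 < I a b := by
  unfold I
  positivity

lemma I_symm {a b : ℝ} (ha : 0 < a) (hb : 0 < b) (hab : a ≠ b) : I b a = I a b := by
  have hA : (0:ℝ) < a ^ a := Real.rpow_pos_of_pos ha a
  have hB : (0:ℝ) < b ^ b := Real.rpow_pos_of_pos hb b
  unfold I
  congr 1
  have h1 : (b:ℝ) ^ b / a ^ a = (a ^ a / b ^ b)⁻¹ := by rw [inv_div]
  rw [h1, Real.inv_rpow (div_pos hA hB).le, ← Real.rpow_neg (div_pos hA hB).le]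
  congr 1
  have hba : b - a ≠ 0 := sub_ne_zero.2 (Ne.symm hab)
  have hd : a - b ≠ 0 := sub_ne_zero.2 hab
  field_simp
  ring

lemma I_lt_A {x y : ℝ} (hy : 0 < y) (hxy : y < x) : I x y < (x + y) / 2 := by
  have hx : 0 < x := hy.trans hxy
  have hK := mK_pos hy hxy
  have hxy0 : (0:ℝ) < (x + y) / 2 := by linarith
  rw [← Real.exp_log (I_pos hx hy), ← Real.exp_log hxy0]
  apply Real.exp_lt_exp.2
  rw [log_I hx hy (ne_of_gt hxy)]
  have hd : 0 < x - y := sub_pos.2 hxy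
  unfold mK at hK
  have h2 : (x * Real.log x - y * Real.log y) / (x - y) < Real.log ((x + y) / 2) + 1 := by
    rw [div_lt_iff₀ hd]
    nlinarith [hK]
  linarith

lemma part1 {a b : ℝ} (hb : 0 < b) (hba : b < a) : I a b > Q (A a b) (G a b) := by
  have ha : 0 < a := hb.trans hba
  have hQsq : (A a b ^ 2 + G a b ^ 2) / 2 = (a ^ 2 + 6 * a * b + b ^ 2) / 8 := by
    unfold A G
    rw [Real.sq_sqrt (by positivity)]
    ring
  have hD0 : (0:ℝ) < a ^ 2 + 6 * a * b + b ^ 2 := mD_pos hb ha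
  have hQpos : 0 < Q (A a b) (G a b) := by
    unfold Q
    rw [hQsq]
    exact Real.sqrt_pos.2 (by positivity)
  rw [gt_iff_lt, ← Real.exp_log hQpos, ← Real.exp_log (I_pos ha hb)]
  apply Real.exp_lt_exp.2
  unfold Q
  rw [hQsq, Real.log_sqrt (by positivity), log_I ha hb (ne_of_gt hba),
    Real.log_div hD0.ne' (by norm_num)]
  have hF := mF_pos hb hba
  unfold mF at hF
  have hd : 0 < a - b := sub_pos.2 hba
  have h2 : (Real.log (a ^ 2 + 6 * a * b + b ^ 2) - Real.log 8) / 2 + 1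
      < (a * Real.log a - b * Real.log b) / (a - b) := by
    rw [lt_div_iff₀ hd]
    nlinarith [hF]
  linarith

lemma part2 {a b : ℝ} (hb : 0 < b) (hba : b < a) :
    Q (A a b) (G a b) > Real.sqrt (I (A a b ^ 2) (G a b ^ 2)) := by
  have ha : 0 < a := hb.trans hba
  have hG0 : 0 < G a b := Real.sqrt_pos.2 (mul_pos ha hb)
  have hAG : G a b < A a b := by
    unfold A G
    have hsq : Real.sqrt b < Real.sqrt a := Real.sqrt_lt_sqrt hb.le hba
    have h2 : 0 < (Real.sqrt a - Real.sqrt b) ^ 2 :=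
      pow_two_pos_of_ne_zero (sub_ne_zero.2 (ne_of_gt hsq))
    rw [Real.sqrt_mul ha.le]
    nlinarith [Real.sq_sqrt ha.le, Real.sq_sqrt hb.le]
  have hx : G a b ^ 2 < A a b ^ 2 := by nlinarith
  have hGsq : 0 < G a b ^ 2 := by positivity
  have hI := I_lt_A hGsq hx
  have hIpos : 0 < I (A a b ^ 2) (G a b ^ 2) := I_pos (pow_pos (hG0.trans hAG) 2) hGsq
  unfold Q
  exact Real.sqrt_lt_sqrt hIpos.le hI

theorem stmt_3 (a b : ℝ) (ha : 0 < a) (hb : 0 < b) (hab : a ≠ b) :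
    I a b > Q (A a b) (G a b) ∧
    Q (A a b) (G a b) > Real.sqrt (I (A a b ^ 2) (G a b ^ 2)) := by
  rcases hab.lt_or_gt with h | h
  · have hA : A a b = A b a := by unfold A; ring
    have hG : G a b = G b a := by unfold G; rw [mul_comm]
    have hI : I a b = I b a := I_symm hb ha (ne_of_gt h)
    rw [hA, hG, hI]
    exact ⟨part1 ha h, part2 ha h⟩
  · exact ⟨part1 hb h, part2 hb h⟩
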